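/- The sequent ◇₁⊤ ⊢ ◇₁⊤ ∧ ◇₀◇₁⊤ is not derivable in RC∇ (assuming the irreflexivity property A ⊬ ◇ₙA); consequently ◇₁A ∧ ∇₀B ⊢ ◇₁(A ∧ ∇₀B) fails in RC∇ for A = ⊤, B = ◇₁⊤, and hence RC∇ is Kripke incomplete. -/
import Mathlib


/-- Strictly positive formulas of RC∇: built from ⊤, variables, ∧, ◇ₙ and ∇ₙ. -/
inductive Fm : Type
  | top : Fm
  | var : ℕ → Fm
  | and : Fm → Fm → Fm
  | dia : ℕ → Fm → Fm
  | nab : ℕ → Fm → Fm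

/-- Derivability of sequents `A ⊢ B` in RC∇. -/
inductive Prf : Fm → Fm → Prop
  | refl (A) : Prf A A
  | top (A) : Prf A .top
  | cut {A B C} : Prf A B → Prf B C → Prf A C
  | andL (A B) : Prf (.and A B) A
  | andR (A B) : Prf (.and A B) B
  | andI {A B C} : Prf A B → Prf A C → Prf A (.and B C)
  | diaMono {A B} (n) : Prf A B → Prf (.dia n A) (.dia n B)
  | diaTrans (n A) : Prf (.dia n (.dia n A)) (.dia n A)
  | diaDown {m n} (A) : m < n → Prf (.dia n A) (.dia m A)
  | diaJ {m n} (A B) : m < n →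
      Prf (.and (.dia n A) (.dia m B)) (.dia n (.and A (.dia m B)))
  | nabMono {A B} (n) : Prf A B → Prf (.nab n A) (.nab n B)
  | nabTrans (n A) : Prf (.nab n (.nab n A)) (.nab n A)
  | nabDown {m n} (A) : m < n → Prf (.nab n A) (.nab m A)
  | nabJ {m n} (A B) : m < n →
      Prf (.and (.nab n A) (.nab m B)) (.nab n (.and A (.nab m B)))
  | nabIntro (n A) : Prf A (.nab n A)
  | diaNab (n A) : Prf (.dia n A) (.nab n A)
  | diaNabAbs {m n} (A) : m ≤ n → Prf (.dia m (.nab n A)) (.dia m A)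
  | nabDiaAbs {m n} (A) : m ≤ n → Prf (.nab n (.dia m A)) (.dia m A)

/-- The formula contains no propositional variables. -/
def VarFree : Fm → Prop
  | .top => True
  | .var _ => False
  | .and A B => VarFree A ∧ VarFree B
  | .dia _ A => VarFree A
  | .nab _ A => VarFree A

/-- Kripke satisfaction for RC∇-formulas. -/
def Sat {W : Type} (R S : ℕ → W → W → Prop) (v : ℕ → W → Prop) : W → Fm → Prop
  | _, .top => True
  | w, .var p => v p w
  | w, .and A B => Sat R S v w A ∧ Sat R S v w B
  | w, .dia n A => ∃ u, R n w u ∧ Sat R S v u A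
  | w, .nab n A => ∃ u, S n w u ∧ Sat R S v u A

/-- Frame conditions for Kripke frames validating the axioms of RC∇. -/
def IsRCnFrame {W : Type} (R S : ℕ → W → W → Prop) : Prop :=
  (∀ n, Transitive (R n)) ∧ (∀ m n, m < n → ∀ x y, R n x y → R m x y) ∧
  (∀ m n, m < n → ∀ x y z, R n z x → R m z y → R m x y) ∧
  (∀ n, Transitive (S n)) ∧ (∀ n x, S n x x) ∧
  (∀ m n, m < n → ∀ x y, S n x y → S m x y) ∧
  (∀ m n, m < n → ∀ x y z, S n z x → S m z y → S m x y) ∧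
  (∀ n x y, R n x y → S n x y) ∧
  (∀ m n, m ≤ n → ∀ x y z, S n x z → R m z y → R m x y) ∧
  (∀ m n, m ≤ n → ∀ x y z, R m x z → S n z y → R m x y)

/-- Assuming irreflexivity: ◇₁⊤ ⊬ ◇₁⊤ ∧ ◇₀◇₁⊤; hence
◇₁A ∧ ∇₀B ⊢ ◇₁(A ∧ ∇₀B) fails for A = ⊤, B = ◇₁⊤, and RC∇ is Kripke
incomplete: some sequent valid on all RC∇-frames is unprovable. -/
theorem stmt_19
    (irr : ∀ (A : Fm) (n : ℕ), VarFree A → ¬ Prf A (.dia n A)) :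
    ¬ Prf (.dia 1 .top) (.and (.dia 1 .top) (.dia 0 (.dia 1 .top))) ∧
    ¬ Prf (.and (.dia 1 .top) (.nab 0 (.dia 1 .top)))
        (.dia 1 (.and .top (.nab 0 (.dia 1 .top)))) ∧
    ∃ A B : Fm,
      (∀ (W : Type) (R S : ℕ → W → W → Prop) (v : ℕ → W → Prop) (w : W),
        IsRCnFrame R S → Sat R S v w A → Sat R S v w B) ∧ ¬ Prf A B := by
  have vf : VarFree (.dia 1 .top) := trivial
  have h1 : ¬ Prf (.dia 1 .top) (.and (.dia 1 .top) (.dia 0 (.dia 1 .top))) := by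
    intro h
    exact irr (.dia 1 .top) 0 vf (h.cut (Prf.andR _ _))
  have h2 : ¬ Prf (.and (.dia 1 .top) (.nab 0 (.dia 1 .top)))
      (.dia 1 (.and .top (.nab 0 (.dia 1 .top)))) := by
    intro h
    have d1 : Prf (.dia 1 .top) (.and (.dia 1 .top) (.nab 0 (.dia 1 .top))) :=
      Prf.andI (Prf.refl _) (Prf.nabIntro 0 _)
    have d2 : Prf (.dia 1 (.and .top (.nab 0 (.dia 1 .top)))) (.dia 0 (.dia 1 .top)) :=
      ((Prf.diaMono 1 (Prf.andR _ _)).cut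
        (Prf.diaDown _ Nat.zero_lt_one)).cut (Prf.diaNabAbs _ (le_refl 0))
    exact irr (.dia 1 .top) 0 vf ((d1.cut h).cut d2)
  refine ⟨h1, h2, .and (.dia 1 .top) (.nab 0 (.dia 1 .top)),
    .dia 1 (.and .top (.nab 0 (.dia 1 .top))), ?_, h2⟩
  rintro W R S v w ⟨-, -, -, -, Srefl, -, SJ, RsubS, -, -⟩ ⟨⟨u, hRu, -⟩, z, hSz, hz⟩
  exact ⟨u, hRu, trivial, z, SJ 0 1 Nat.zero_lt_one _ _ _ (RsubS 1 w u hRu) hSz, hz⟩
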